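/- If G is a connected finite simple graph with H(G) = 5/2, then G is isomorphic to the 5-cycle C₅. -/

import Mathlib

noncomputable section

/-- `g : [q]^V → [q]` depends essentially on coordinate `u`: there exist two inputs that
differ only at coordinate `u` on which `g` takes different values. -/
def DependsOnCoord {V : Type*} {q : ℕ} (g : (V → Fin q) → Fin q) (u : V) : Prop :=
  ∃ a b : V → Fin q, (∀ w, w ≠ u → a w = b w) ∧ g a ≠ g b

/-- The interaction graph of `f` is contained in the simple graph `G`
(viewed as the symmetric loopless digraph with arcs `(u,v)` and `(v,u)` for every edge `uv`). -/
def IGLe {V : Type*} {q : ℕ} (G : SimpleGraph V) (f : (V → Fin q) → (V → Fin q)) : Prop :=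
  ∀ u v : V, DependsOnCoord (fun x => f x v) u → G.Adj u v

/-- The `q`-ary guessing number of a simple graph `G`: the maximum of `log_q |Fix(f)|`
over all `f` whose interaction graph is contained in `G`. -/
def guessing {V : Type*} (G : SimpleGraph V) (q : ℕ) : ℝ :=
  sSup {x : ℝ | ∃ f : (V → Fin q) → (V → Fin q),
    IGLe G f ∧ x = Real.logb q (Set.ncard {p : V → Fin q | f p = p})}

/-- The entropy of a simple graph: the supremum over `q ≥ 2` of its `q`-guessing numbers. -/
def graphEntropy {V : Type*} (G : SimpleGraph V) : ℝ :=
  sSup {x : ℝ | ∃ q : ℕ, 2 ≤ q ∧ x = guessing G q}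

/-- The set of all entropies of finite simple graphs. -/
def entropySet : Set ℝ := {x : ℝ | ∃ (n : ℕ) (G : SimpleGraph (Fin n)), graphEntropy G = x}

/-- A finite simple graph is entropy-minimal if no simple graph with fewer vertices has the same
fractional part of the entropy. -/
def EntropyMinimal {n : ℕ} (G : SimpleGraph (Fin n)) : Prop :=
  ∀ m : ℕ, m < n → ∀ G' : SimpleGraph (Fin m),
    Int.fract (graphEntropy G') ≠ Int.fract (graphEntropy G)


section Lemmas

variable {V : Type*} [Fintype V] [DecidableEq V] {q : ℕ}

lemma eq_of_not_dependsOn (g : (V → Fin q) → Fin q) (N : Set V)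
    (h : ∀ u, DependsOnCoord g u → u ∈ N) :
    ∀ a b : V → Fin q, (∀ i ∈ N, a i = b i) → g a = g b := by
  suffices H : ∀ (k : ℕ) (a b : V → Fin q),
      (Finset.univ.filter fun i => a i ≠ b i).card ≤ k → (∀ i ∈ N, a i = b i) → g a = g b by
    intro a b hab; exact H _ a b le_rfl hab
  intro k
  induction k with
  | zero =>
    intro a b hc _
    have hall : ∀ i, a i = b i := by
      intro i; by_contra hi
      have hmem : i ∈ Finset.univ.filter fun i => a i ≠ b i := by simp [hi]
      have := Finset.card_pos.mpr ⟨i, hmem⟩; omega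
    rw [funext hall]
  | succ k ih =>
    intro a b hc hab
    by_cases hempty : ∀ i, a i = b i
    · rw [funext hempty]
    · push_neg at hempty
      obtain ⟨i0, hi0⟩ := hempty
      have hi0N : i0 ∉ N := fun hm => hi0 (hab i0 hm)
      have h1 : g a = g (Function.update a i0 (b i0)) := by
        by_contra hne
        exact hi0N (h i0 ⟨a, Function.update a i0 (b i0),
          fun w hw => (Function.update_of_ne hw _ _).symm, hne⟩)
      rw [h1]
      apply ih (Function.update a i0 (b i0)) b
      · have hsub : (Finset.univ.filter fun i => Function.update a i0 (b i0) i ≠ b i) ⊆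
            (Finset.univ.filter fun i => a i ≠ b i).erase i0 := by
          intro j hj
          simp only [Finset.mem_filter, Finset.mem_univ, true_and] at hj
          rcases eq_or_ne j i0 with rfl | hji
          · rw [Function.update_self] at hj; exact absurd rfl hj
          · refine Finset.mem_erase.mpr ⟨hji, ?_⟩
            simp only [Finset.mem_filter, Finset.mem_univ, true_and]
            rwa [Function.update_of_ne hji] at hj
        have hmem : i0 ∈ Finset.univ.filter fun i => a i ≠ b i := by simp [hi0]
        have := Finset.card_le_card hsub
        have := Finset.card_erase_of_mem hmem
        omega
      · intro i hiN
        rcases eq_or_ne i i0 with rfl | hne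
        · exact absurd hiN hi0N
        · rw [Function.update_of_ne hne]; exact hab i hiN

lemma dependsOn_mem (g : (V → Fin q) → Fin q) (N : Set V)
    (hro : ∀ a b : V → Fin q, (∀ i ∈ N, a i = b i) → g a = g b) (u : V)
    (hd : DependsOnCoord g u) : u ∈ N := by
  by_contra hu
  obtain ⟨a, b, hab, hne⟩ := hd
  exact hne (hro a b (fun i hi => hab i (fun h => hu (h ▸ hi))))

lemma logb_le_of_le {m k : ℕ} (hq : 2 ≤ q) (h : m ≤ q ^ k) :
    Real.logb q m ≤ (k : ℝ) := by
  have hq1 : (1:ℝ) < (q:ℝ) := by exact_mod_cast hq.trans_lt' one_lt_two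
  rcases Nat.eq_zero_or_pos m with rfl | hm
  · rw [Nat.cast_zero, Real.logb_zero]; positivity
  · have h1 : Real.logb q m ≤ Real.logb q ((q:ℝ) ^ k) := by
      apply Real.logb_le_logb_of_le hq1 (by exact_mod_cast hm)
      exact_mod_cast h
    calc Real.logb q m ≤ Real.logb q ((q:ℝ) ^ k) := h1
      _ = k := by rw [Real.logb_pow, Real.logb_self_eq_one hq1, mul_one]

lemma le_logb_of_le {m k : ℕ} (hq : 2 ≤ q) (h : q ^ k ≤ m) :
    (k : ℝ) ≤ Real.logb q m := by
  have hq1 : (1:ℝ) < (q:ℝ) := by exact_mod_cast hq.trans_lt' one_lt_two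
  have h1 : Real.logb q ((q:ℝ) ^ k) ≤ Real.logb q m := by
    apply Real.logb_le_logb_of_le hq1 (by positivity)
    exact_mod_cast h
  calc (k:ℝ) = Real.logb q ((q:ℝ)^k) := by
        rw [Real.logb_pow, Real.logb_self_eq_one hq1, mul_one]
    _ ≤ _ := h1

lemma guessing_set_nonempty (G : SimpleGraph V) (hq : 1 ≤ q) :
    (0:ℝ) ∈ {x : ℝ | ∃ f : (V → Fin q) → (V → Fin q),
      IGLe G f ∧ x = Real.logb q (Set.ncard {p : V → Fin q | f p = p})} := by
  refine ⟨fun _ => fun _ => ⟨0, hq⟩, fun u v hd => ?_, ?_⟩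
  · obtain ⟨a, b, _, hne⟩ := hd; exact absurd rfl hne
  · have : {p : V → Fin q | (fun _ : V => (⟨0, hq⟩ : Fin q)) = p} =
        {(fun _ : V => (⟨0, hq⟩ : Fin q))} := by
      ext p; simp [eq_comm, Set.mem_singleton_iff]
    rw [this, Set.ncard_singleton]
    simp

lemma fix_ncard_le (G : SimpleGraph V) (f : (V → Fin q) → (V → Fin q)) :
    Set.ncard {p : V → Fin q | f p = p} ≤ q ^ (Fintype.card V) := by
  classical
  have h1 : Set.ncard {p : V → Fin q | f p = p} ≤ Set.ncard (Set.univ : Set (V → Fin q)) :=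
    Set.ncard_le_ncard (Set.subset_univ _) Set.finite_univ
  rw [Set.ncard_univ, Nat.card_eq_fintype_card] at h1
  simpa [Fintype.card_fun] using h1

lemma guessing_le_of_bound (G : SimpleGraph V) (hq : 2 ≤ q) (k : ℕ)
    (hb : ∀ f : (V → Fin q) → (V → Fin q), IGLe G f →
      Set.ncard {p : V → Fin q | f p = p} ≤ q ^ k) :
    guessing G q ≤ (k : ℝ) := by
  unfold guessing
  refine csSup_le ⟨0, guessing_set_nonempty G (by omega)⟩ ?_
  rintro x ⟨f, hf, rfl⟩
  exact logb_le_of_le hq (hb f hf)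

lemma guessing_le_card (G : SimpleGraph V) (hq : 2 ≤ q) :
    guessing G q ≤ (Fintype.card V : ℝ) :=
  guessing_le_of_bound G hq _ (fun f _ => fix_ncard_le G f)

lemma le_guessing (G : SimpleGraph V) (hq : 2 ≤ q) (f : (V → Fin q) → (V → Fin q))
    (hf : IGLe G f) :
    Real.logb q (Set.ncard {p : V → Fin q | f p = p}) ≤ guessing G q := by
  unfold guessing
  refine le_csSup ⟨(Fintype.card V : ℝ), ?_⟩ ⟨f, hf, rfl⟩
  rintro x ⟨g, _, rfl⟩
  exact logb_le_of_le hq (fix_ncard_le G g)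

lemma graphEntropy_le (G : SimpleGraph V) (m : ℝ)
    (h : ∀ q : ℕ, 2 ≤ q → guessing G q ≤ m) : graphEntropy G ≤ m := by
  unfold graphEntropy
  refine csSup_le ⟨guessing G 2, 2, le_rfl, rfl⟩ ?_
  rintro x ⟨q, hq, rfl⟩
  exact h q hq

lemma le_graphEntropy (G : SimpleGraph V) (hq : 2 ≤ q) :
    guessing G q ≤ graphEntropy G := by
  unfold graphEntropy
  refine le_csSup ⟨(Fintype.card V : ℝ), ?_⟩ ⟨q, hq, rfl⟩
  rintro x ⟨q', hq', rfl⟩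
  exact guessing_le_card G hq'

end Lemmas
section Bounds

variable {V : Type*} [Fintype V] [DecidableEq V]

def add2 : Fin 2 → Fin 2 → Fin 2 := fun x y => if x = y then 0 else 1

lemma graphEntropy_le_two_of_cover (G : SimpleGraph V) (u v : V)
    (hcov : ∀ a b, G.Adj a b → a = u ∨ a = v ∨ b = u ∨ b = v) :
    graphEntropy G ≤ 2 := by
  have h2 : ((2:ℕ):ℝ) = 2 := by norm_num
  rw [← h2]
  apply graphEntropy_le
  intro q hq
  apply guessing_le_of_bound G hq 2
  intro f hf
  have hinj : Function.Injective
      (fun p : {p : V → Fin q | f p = p} => ((p : V → Fin q) u, (p : V → Fin q) v)) := by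
    rintro ⟨p1, hp1⟩ ⟨p2, hp2⟩ hpair
    simp only [Prod.mk.injEq] at hpair
    apply Subtype.ext
    funext w
    rcases eq_or_ne w u with rfl | hwu
    · exact hpair.1
    rcases eq_or_ne w v with rfl | hwv
    · exact hpair.2
    have hp1' := congrFun (hp1 : f p1 = p1) w
    have hp2' := congrFun (hp2 : f p2 = p2) w
    have key : f p1 w = f p2 w := by
      apply eq_of_not_dependsOn (fun x => f x w) {u, v}
      · intro t ht
        rcases hcov t w (hf t w ht) with h|h|h|h
        · exact Or.inl h
        · exact Or.inr h
        · exact absurd h hwu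
        · exact absurd h hwv
      · intro i hi
        rcases hi with rfl | rfl
        · exact hpair.1
        · exact hpair.2
    show p1 w = p2 w
    rw [← hp1', key, hp2']

  have h1 : Set.ncard {p : V → Fin q | f p = p} = Nat.card {p : V → Fin q | f p = p} :=
    (Nat.card_coe_set_eq _).symm
  rw [h1]
  calc Nat.card {p : V → Fin q | f p = p} ≤ Nat.card (Fin q × Fin q) :=
        Nat.card_le_card_of_injective _ hinj
    _ = q ^ 2 := by simp [Nat.card_eq_fintype_card]; ring

lemma three_le_graphEntropy (G : SimpleGraph V) (f : (V → Fin 2) → (V → Fin 2))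
    (hf : IGLe G f) (inj : (Fin 3 → Fin 2) → (V → Fin 2))
    (hfix : ∀ c, f (inj c) = inj c) (hinj : Function.Injective inj) :
    (3:ℝ) ≤ graphEntropy G := by
  have h8 : 2 ^ 3 ≤ Set.ncard {p : V → Fin 2 | f p = p} := by
    rw [← Nat.card_coe_set_eq]
    have hi2 : Function.Injective
        (fun c : Fin 3 → Fin 2 => (⟨inj c, hfix c⟩ : {p : V → Fin 2 | f p = p})) := by
      intro c1 c2 h
      exact hinj (congrArg Subtype.val h)
    have := Nat.card_le_card_of_injective _ hi2
    refine le_trans (le_of_eq ?_) this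
    simp [Nat.card_eq_fintype_card, Fintype.card_fun]
  have h3 : ((3:ℕ):ℝ) ≤ Real.logb ((2:ℕ):ℝ) (Set.ncard {p : V → Fin 2 | f p = p}) :=
    le_logb_of_le le_rfl h8
  have h4 := le_guessing G le_rfl f hf
  have h5 := le_graphEntropy (q := 2) G le_rfl
  have : ((3:ℕ):ℝ) = (3:ℝ) := by norm_num
  rw [← this]
  exact h3.trans (h4.trans h5)

lemma dependsOn_single {q : ℕ} {g : (V → Fin q) → Fin q} {x : V}
    (hg : ∀ p, g p = p x) {u : V} (hd : DependsOnCoord g u) : u = x :=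
  dependsOn_mem g {x} (fun a b h => by rw [hg, hg]; exact h x rfl) u hd

lemma dependsOn_pair {g : (V → Fin 2) → Fin 2} {x y : V}
    (hg : ∀ p, g p = add2 (p x) (p y)) {u : V} (hd : DependsOnCoord g u) : u = x ∨ u = y := by
  have := dependsOn_mem g {x, y}
    (fun a b h => by rw [hg, hg, h x (by simp), h y (by simp)]) u hd
  simpa using this

lemma dependsOn_triple {g : (V → Fin 2) → Fin 2} {x y z : V}
    (hg : ∀ p, g p = add2 (p x) (add2 (p y) (p z))) {u : V} (hd : DependsOnCoord g u) :
    u = x ∨ u = y ∨ u = z := by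
  have := dependsOn_mem g {x, y, z}
    (fun a b h => by
      rw [hg, hg, h x (by simp), h y (by simp), h z (by simp)]) u hd
  simpa using this

lemma dependsOnCoord_const {q : ℕ} {g : (V → Fin q) → Fin q} {c : Fin q}
    (hg : ∀ p, g p = c) {u : V} (hd : DependsOnCoord g u) : False := by
  obtain ⟨a, b, _, hne⟩ := hd
  exact hne (by rw [hg, hg])

end Bounds
section Configs

variable {V : Type*} [Fintype V] [DecidableEq V]

/-- Three pairwise disjoint edges force entropy ≥ 3. -/
lemma cfg_three_edges (G : SimpleGraph V) (a1 b1 a2 b2 a3 b3 : V)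
    (h1 : G.Adj a1 b1) (h2 : G.Adj a2 b2) (h3 : G.Adj a3 b3)
    (d1 : a1 ≠ a2) (d2 : a1 ≠ b2) (d3 : b1 ≠ a2) (d4 : b1 ≠ b2)
    (d5 : a1 ≠ a3) (d6 : a1 ≠ b3) (d7 : b1 ≠ a3) (d8 : b1 ≠ b3)
    (d9 : a2 ≠ a3) (d10 : a2 ≠ b3) (d11 : b2 ≠ a3) (d12 : b2 ≠ b3) :
    (3:ℝ) ≤ graphEntropy G := by
  have n1 := h1.ne; have n2 := h2.ne; have n3 := h3.ne
  apply three_le_graphEntropy G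
    (f := fun p v =>
      if v = a1 then p b1 else if v = b1 then p a1 else
      if v = a2 then p b2 else if v = b2 then p a2 else
      if v = a3 then p b3 else if v = b3 then p a3 else 0)
    (inj := fun c v =>
      if v = a1 ∨ v = b1 then c 0 else
      if v = a2 ∨ v = b2 then c 1 else
      if v = a3 ∨ v = b3 then c 2 else 0)
  · intro u v hd
    by_cases hv1 : v = a1
    · subst hv1
      have := dependsOn_single (x := b1) (fun p => by simp) hd
      subst this; exact h1.symm
    by_cases hv2 : v = b1
    · subst hv2
      have := dependsOn_single (x := a1) (fun p => by simp [Ne.symm n1]) hd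
      subst this; exact h1
    by_cases hv3 : v = a2
    · subst hv3
      have := dependsOn_single (x := b2) (fun p => by simp [Ne.symm d1, Ne.symm d3]) hd
      subst this; exact h2.symm
    by_cases hv4 : v = b2
    · subst hv4
      have := dependsOn_single (x := a2)
        (fun p => by simp [Ne.symm d2, Ne.symm d4, Ne.symm n2]) hd
      subst this; exact h2
    by_cases hv5 : v = a3
    · subst hv5
      have := dependsOn_single (x := b3)
        (fun p => by simp [Ne.symm d5, Ne.symm d7, Ne.symm d9, Ne.symm d11]) hd
      subst this; exact h3.symm
    by_cases hv6 : v = b3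
    · subst hv6
      have := dependsOn_single (x := a3)
        (fun p => by simp [Ne.symm d6, Ne.symm d8, Ne.symm d10, Ne.symm d12, Ne.symm n3]) hd
      subst this; exact h3
    exact absurd hd (fun hd => dependsOnCoord_const (c := 0)
      (fun p => by simp [hv1, hv2, hv3, hv4, hv5, hv6]) hd)
  · intro c
    funext v
    by_cases hv1 : v = a1
    · subst hv1; simp [n1, Ne.symm n1]
    by_cases hv2 : v = b1
    · subst hv2; simp [n1, Ne.symm n1]
    by_cases hv3 : v = a2
    · subst hv3; simp [Ne.symm d1, Ne.symm d3, d2.symm, d4.symm, n2, n2.symm]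
    by_cases hv4 : v = b2
    · subst hv4; simp [Ne.symm d2, Ne.symm d4, d1.symm, d3.symm, n2, n2.symm]
    by_cases hv5 : v = a3
    · subst hv5; simp [d5.symm, d7.symm, d9.symm, d11.symm, d6.symm, d8.symm, d10.symm,
        d12.symm, n3, n3.symm]
    by_cases hv6 : v = b3
    · subst hv6; simp [d5.symm, d7.symm, d9.symm, d11.symm, d6.symm, d8.symm, d10.symm,
        d12.symm, n3, n3.symm]
    simp [hv1, hv2, hv3, hv4, hv5, hv6]
  · intro c1 c2 h
    funext i
    have e1 := congrFun h a1
    have e2 := congrFun h a2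
    have e3 := congrFun h a3
    simp [d1, d2, d5, d6, d9, d10, Ne.symm d1, Ne.symm d3, Ne.symm d5, Ne.symm d7,
      Ne.symm d9, Ne.symm d11, n1] at e1 e2 e3
    fin_cases i <;> simp_all

end Configs
section Configs2

variable {V : Type*} [Fintype V] [DecidableEq V]

lemma addA : ∀ x y : Fin 2, add2 y (add2 x y) = x := by decide
lemma addB : ∀ x y : Fin 2, add2 x (add2 x y) = y := by decide
lemma addK1 : ∀ x y z : Fin 2, add2 y (add2 z (add2 x (add2 y z))) = x := by decide
lemma addK2 : ∀ x y z : Fin 2, add2 x (add2 z (add2 x (add2 y z))) = y := by decide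
lemma addK3 : ∀ x y z : Fin 2, add2 x (add2 y (add2 x (add2 y z))) = z := by decide

/-- A triangle plus a disjoint edge forces entropy ≥ 3. -/
lemma cfg_triangle_edge (G : SimpleGraph V) (a b c d e : V)
    (hab : G.Adj a b) (hbc : G.Adj b c) (hac : G.Adj a c) (hde : G.Adj d e)
    (t1 : d ≠ a) (t2 : d ≠ b) (t3 : d ≠ c) (t4 : e ≠ a) (t5 : e ≠ b) (t6 : e ≠ c) :
    (3:ℝ) ≤ graphEntropy G := by
  have n1 := hab.ne; have n2 := hbc.ne; have n3 := hac.ne; have n4 := hde.ne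
  apply three_le_graphEntropy G
    (f := fun p v =>
      if v = a then add2 (p b) (p c) else
      if v = b then add2 (p a) (p c) else
      if v = c then add2 (p a) (p b) else
      if v = d then p e else if v = e then p d else 0)
    (inj := fun c' v =>
      if v = a then c' 0 else
      if v = b then c' 1 else
      if v = c then add2 (c' 0) (c' 1) else
      if v = d ∨ v = e then c' 2 else 0)
  · intro u v hd
    by_cases hv1 : v = a
    · subst hv1
      rcases dependsOn_pair (x := b) (y := c) (fun p => by simp) hd with rfl | rfl
      · exact hab.symm
      · exact hac.symm
    by_cases hv2 : v = b
    · subst hv2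
      rcases dependsOn_pair (x := a) (y := c) (fun p => by simp [Ne.symm n1]) hd with rfl | rfl
      · exact hab
      · exact hbc.symm
    by_cases hv3 : v = c
    · subst hv3
      rcases dependsOn_pair (x := a) (y := b)
        (fun p => by simp [Ne.symm n3, Ne.symm n2]) hd with rfl | rfl
      · exact hac
      · exact hbc
    by_cases hv4 : v = d
    · subst hv4
      have := dependsOn_single (x := e) (fun p => by simp [t1, t2, t3]) hd
      subst this; exact hde.symm
    by_cases hv5 : v = e
    · subst hv5
      have := dependsOn_single (x := d) (fun p => by simp [t4, t5, t6, Ne.symm n4]) hd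
      subst this; exact hde
    exact absurd hd (fun hd => dependsOnCoord_const (c := 0)
      (fun p => by simp [hv1, hv2, hv3, hv4, hv5]) hd)
  · intro c'
    funext v
    by_cases hv1 : v = a
    · subst hv1; simp [n1, n2, n3, Ne.symm n1, Ne.symm n2, Ne.symm n3, addA]
    by_cases hv2 : v = b
    · subst hv2; simp [n1, n2, n3, Ne.symm n1, Ne.symm n2, Ne.symm n3, addB]
    by_cases hv3 : v = c
    · subst hv3; simp [n1, n2, n3, Ne.symm n1, Ne.symm n2, Ne.symm n3]
    by_cases hv4 : v = d
    · subst hv4; simp [t1, t2, t3, t4, t5, t6, n4, Ne.symm n4]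
    by_cases hv5 : v = e
    · subst hv5; simp [t1, t2, t3, t4, t5, t6, n4, Ne.symm n4]
    simp [hv1, hv2, hv3, hv4, hv5]
  · intro c1 c2 h
    funext i
    have e1 := congrFun h a
    have e2 := congrFun h b
    have e3 := congrFun h d
    simp [n1, Ne.symm n1, t1, t2, t3, Ne.symm t1, Ne.symm t2, Ne.symm t3, n4] at e1 e2 e3
    fin_cases i <;> simp_all

/-- A K4 forces entropy ≥ 3. -/
lemma cfg_K4 (G : SimpleGraph V) (a b c d : V)
    (hab : G.Adj a b) (hac : G.Adj a c) (had : G.Adj a d)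
    (hbc : G.Adj b c) (hbd : G.Adj b d) (hcd : G.Adj c d) :
    (3:ℝ) ≤ graphEntropy G := by
  have n1 := hab.ne; have n2 := hac.ne; have n3 := had.ne
  have n4 := hbc.ne; have n5 := hbd.ne; have n6 := hcd.ne
  apply three_le_graphEntropy G
    (f := fun p v =>
      if v = a then add2 (p b) (add2 (p c) (p d)) else
      if v = b then add2 (p a) (add2 (p c) (p d)) else
      if v = c then add2 (p a) (add2 (p b) (p d)) else
      if v = d then add2 (p a) (add2 (p b) (p c)) else 0)
    (inj := fun c' v =>
      if v = a then c' 0 else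
      if v = b then c' 1 else
      if v = c then c' 2 else
      if v = d then add2 (c' 0) (add2 (c' 1) (c' 2)) else 0)
  · intro u v hd
    by_cases hv1 : v = a
    · subst hv1
      rcases dependsOn_triple (x := b) (y := c) (z := d) (fun p => by simp) hd with rfl|rfl|rfl
      · exact hab.symm
      · exact hac.symm
      · exact had.symm
    by_cases hv2 : v = b
    · subst hv2
      rcases dependsOn_triple (x := a) (y := c) (z := d)
        (fun p => by simp [Ne.symm n1]) hd with rfl|rfl|rfl
      · exact hab
      · exact hbc.symm
      · exact hbd.symm
    by_cases hv3 : v = c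
    · subst hv3
      rcases dependsOn_triple (x := a) (y := b) (z := d)
        (fun p => by simp [Ne.symm n2, Ne.symm n4]) hd with rfl|rfl|rfl
      · exact hac
      · exact hbc
      · exact hcd.symm
    by_cases hv4 : v = d
    · subst hv4
      rcases dependsOn_triple (x := a) (y := b) (z := c)
        (fun p => by simp [Ne.symm n3, Ne.symm n5, Ne.symm n6]) hd with rfl|rfl|rfl
      · exact had
      · exact hbd
      · exact hcd
    exact absurd hd (fun hd => dependsOnCoord_const (c := 0)
      (fun p => by simp [hv1, hv2, hv3, hv4]) hd)
  · intro c'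
    funext v
    by_cases hv1 : v = a
    · subst hv1; simp [n1, n2, n3, Ne.symm n1, Ne.symm n2, Ne.symm n3, n4, n5, n6, Ne.symm n4, Ne.symm n5, Ne.symm n6, addK1]
    by_cases hv2 : v = b
    · subst hv2; simp [n1, n2, n3, Ne.symm n1, Ne.symm n2, Ne.symm n3, n4, n5, n6, Ne.symm n4, Ne.symm n5, Ne.symm n6, addK2]
    by_cases hv3 : v = c
    · subst hv3; simp [n1, n2, n3, Ne.symm n1, Ne.symm n2, Ne.symm n3, n4, n5, n6, Ne.symm n4, Ne.symm n5, Ne.symm n6, addK3]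
    by_cases hv4 : v = d
    · subst hv4; simp [n1, n2, n3, Ne.symm n1, Ne.symm n2, Ne.symm n3, n4, n5, n6, Ne.symm n4, Ne.symm n5, Ne.symm n6]
    simp [hv1, hv2, hv3, hv4]
  · intro c1 c2 h
    funext i
    have e1 := congrFun h a
    have e2 := congrFun h b
    have e3 := congrFun h c
    simp [n1, n2, n3, Ne.symm n1, Ne.symm n2, Ne.symm n3, n4, n5, n6, Ne.symm n4,
      Ne.symm n5, Ne.symm n6] at e1 e2 e3
    fin_cases i <;> simp_all

end Configs2
section Comb

variable {V : Type*} [Fintype V] [DecidableEq V]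

def NoCov (G : SimpleGraph V) : Prop :=
  ∀ u v : V, ∃ a b : V, G.Adj a b ∧ a ≠ u ∧ a ≠ v ∧ b ≠ u ∧ b ≠ v

def NoM3 (G : SimpleGraph V) : Prop :=
  ∀ a1 b1 a2 b2 a3 b3 : V, G.Adj a1 b1 → G.Adj a2 b2 → G.Adj a3 b3 →
    a1 ≠ a2 → a1 ≠ b2 → b1 ≠ a2 → b1 ≠ b2 → a1 ≠ a3 → a1 ≠ b3 → b1 ≠ a3 → b1 ≠ b3 →
    a2 ≠ a3 → a2 ≠ b3 → b2 ≠ a3 → b2 ≠ b3 → False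

def NoTE (G : SimpleGraph V) : Prop :=
  ∀ a b c d e : V, G.Adj a b → G.Adj b c → G.Adj a c → G.Adj d e →
    d ≠ a → d ≠ b → d ≠ c → e ≠ a → e ≠ b → e ≠ c → False

def NoK4 (G : SimpleGraph V) : Prop :=
  ∀ a b c d : V, G.Adj a b → G.Adj a c → G.Adj a d → G.Adj b c → G.Adj b d →
    G.Adj c d → False

/-- Given a triangle, the third vertex has a neighbor outside the triangle. -/
lemma tri_aux {G : SimpleGraph V} (hcov : NoCov G) (hTE : NoTE G)
    (a b c : V) (hab : G.Adj a b) (hbc : G.Adj b c) (hac : G.Adj a c) :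
    ∃ w, G.Adj c w ∧ w ≠ a ∧ w ≠ b ∧ w ≠ c := by
  obtain ⟨p, q, hpq, hp1, hp2, hq1, hq2⟩ := hcov a b
  by_cases hpc : p = c
  · subst hpc
    exact ⟨q, hpq, hq1, hq2, hpq.ne'⟩
  by_cases hqc : q = c
  · subst hqc
    exact ⟨p, hpq.symm, hp1, hp2, hpc⟩
  exact absurd hpq (fun h => hTE a b c p q hab hbc hac h hp1 hp2 hpc hq1 hq2 hqc)

/-- No vertex outside a triangle can be adjacent to two of its vertices. -/
lemma tri_no_double {G : SimpleGraph V} (hcov : NoCov G) (hTE : NoTE G) (hK4 : NoK4 G)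
    (a b c u : V) (hab : G.Adj a b) (hbc : G.Adj b c) (hac : G.Adj a c)
    (h1 : G.Adj u a) (h2 : G.Adj u b) (h3 : u ≠ c) : False := by
  obtain ⟨w, hcw, hw1, hw2, hw3⟩ := tri_aux hcov hTE a b c hab hbc hac
  by_cases hwu : w = u
  · subst hwu
    exact hK4 a b c w hab hac h1.symm hbc h2.symm hcw
  · exact hTE a b u c w hab h2.symm h1.symm hcw
      hac.ne' hbc.ne' h3.symm hw1 hw2 (fun h => hwu h)

/-- The graph is triangle-free. -/
lemma no_triangle {G : SimpleGraph V} (hcov : NoCov G) (hM3 : NoM3 G) (hTE : NoTE G)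
    (hK4 : NoK4 G) (a b c : V) (hab : G.Adj a b) (hbc : G.Adj b c) (hac : G.Adj a c) :
    False := by
  obtain ⟨wc, hwc, hwc1, hwc2, hwc3⟩ := tri_aux hcov hTE a b c hab hbc hac
  obtain ⟨wa, hwa, hwa2, hwa3, hwa1⟩ := tri_aux hcov hTE b c a hbc hac.symm hab.symm
  obtain ⟨wb, hwb, hwb1, hwb3, hwb2⟩ := tri_aux hcov hTE a c b hac hbc.symm hab
  have dab : wa ≠ wb := by
    intro h; subst h
    exact tri_no_double hcov hTE hK4 a b c wa hab hbc hac hwa.symm hwb.symm hwa3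
  have dac : wa ≠ wc := by
    intro h; subst h
    exact tri_no_double hcov hTE hK4 a c b wa hac hbc.symm hab hwa.symm hwc.symm hwa2
  have dbc : wb ≠ wc := by
    intro h; subst h
    exact tri_no_double hcov hTE hK4 b c a wb hbc hac.symm hab.symm hwb.symm hwc.symm hwb1
  exact hM3 a wa b wb c wc hwa hwb hwc
    hab.ne (Ne.symm hwb1) hwa2 dab hac.ne (Ne.symm hwc1) hwa3 dac
    hbc.ne (Ne.symm hwc2) hwb3 dbc

end Comb
section Comb2

variable {V : Type*} [Fintype V] [DecidableEq V]

def MeetsS (G : SimpleGraph V) (a b c d : V) : Prop :=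
  ∀ p q, G.Adj p q → p = a ∨ p = b ∨ p = c ∨ p = d ∨ q = a ∨ q = b ∨ q = c ∨ q = d

def IsC5 (G : SimpleGraph V) (a b c d u : V) : Prop :=
  G.Adj a b ∧ G.Adj b c ∧ G.Adj c d ∧ G.Adj d u ∧ G.Adj u a ∧
  ¬G.Adj a c ∧ ¬G.Adj a d ∧ ¬G.Adj b d ∧ ¬G.Adj b u ∧ ¬G.Adj c u ∧
  a ≠ b ∧ a ≠ c ∧ a ≠ d ∧ a ≠ u ∧ b ≠ c ∧ b ≠ d ∧ b ≠ u ∧ c ≠ d ∧ c ≠ u ∧ d ≠ u ∧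
  (∀ v, v = a ∨ v = b ∨ v = c ∨ v = d ∨ v = u)

lemma exists_neighbor {G : SimpleGraph V} (hconn : G.Connected) (v t : V) (hvt : v ≠ t) :
    ∃ z, G.Adj v z := by
  obtain ⟨w⟩ := hconn.preconnected v t
  cases w with
  | nil => exact absurd rfl hvt
  | cons h _ => exact ⟨_, h⟩

lemma extract_edge {G : SimpleGraph V} {a b c d : V} (hmeet : MeetsS G a b c d)
    (hcov : NoCov G) (x y : V) :
    ∃ p q, G.Adj p q ∧ p ≠ x ∧ p ≠ y ∧ q ≠ x ∧ q ≠ y ∧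
      (p = a ∨ p = b ∨ p = c ∨ p = d) := by
  obtain ⟨p, q, hpq, h1, h2, h3, h4⟩ := hcov x y
  rcases hmeet p q hpq with h|h|h|h|h|h|h|h
  · exact ⟨p, q, hpq, h1, h2, h3, h4, Or.inl h⟩
  · exact ⟨p, q, hpq, h1, h2, h3, h4, Or.inr (Or.inl h)⟩
  · exact ⟨p, q, hpq, h1, h2, h3, h4, Or.inr (Or.inr (Or.inl h))⟩
  · exact ⟨p, q, hpq, h1, h2, h3, h4, Or.inr (Or.inr (Or.inr h))⟩
  · exact ⟨q, p, hpq.symm, h3, h4, h1, h2, Or.inl h⟩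
  · exact ⟨q, p, hpq.symm, h3, h4, h1, h2, Or.inr (Or.inl h)⟩
  · exact ⟨q, p, hpq.symm, h3, h4, h1, h2, Or.inr (Or.inr (Or.inl h))⟩
  · exact ⟨q, p, hpq.symm, h3, h4, h1, h2, Or.inr (Or.inr (Or.inr h))⟩

/-- Case: both "parallel" cross edges present — contradiction. -/
lemma lem_A {G : SimpleGraph V} (hcov : NoCov G) (hM3 : NoM3 G) (hTE : NoTE G)
    (hK4 : NoK4 G) (a b c d : V)
    (hab : G.Adj a b) (hcd : G.Adj c d) (hac : G.Adj a c) (hbd : G.Adj b d)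
    (dad : a ≠ d) (dbc : b ≠ c) (hmeet : MeetsS G a b c d) : False := by
  have htri := no_triangle hcov hM3 hTE hK4 (G := G)
  have nbc : ¬G.Adj b c := fun h => htri a b c hab h hac
  have nad : ¬G.Adj a d := fun h => htri a c d hac hcd h
  obtain ⟨s, w, hsw, hs1, hs2, hw1, hw4, hs⟩ := extract_edge hmeet hcov a d
  obtain ⟨t, w', htw, ht2, ht3, hw'2, hw'3, ht⟩ := extract_edge hmeet hcov b c
  rcases hs with h|h|h|h
  · exact absurd h hs1
  · rw [h] at hsw
    have hwb : w ≠ b := hsw.ne'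
    have hwc : w ≠ c := fun hh => nbc (hh ▸ hsw)
    rcases ht with h'|h'|h'|h'
    · rw [h'] at htw
      have hw'a : w' ≠ a := htw.ne'
      have hw'd : w' ≠ d := fun hh => nad (hh ▸ htw)
      by_cases hww : w = w'
      · subst hww; exact htri a b w hab hsw htw
      · exact hM3 b w a w' c d hsw htw hcd hab.ne' (Ne.symm hw'2) hw1 hww
          dbc hbd.ne hwc hw4 hac.ne dad hw'3 hw'd
    · exact absurd h' ht2
    · exact absurd h' ht3
    · rw [h'] at htw
      have hw'd : w' ≠ d := htw.ne'
      have hw'a : w' ≠ a := fun hh => nad (hh ▸ htw.symm)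
      by_cases hww : w = w'
      · subst hww; exact htri b d w hbd htw hsw
      · exact hM3 b w d w' a c hsw htw hac hbd.ne (Ne.symm hw'2) hw4 hww
          hab.ne' dbc hw1 hwc dad.symm hcd.ne' hw'a hw'3
  · rw [h] at hsw
    have hwc : w ≠ c := hsw.ne'
    have hwb : w ≠ b := fun hh => nbc (hh ▸ hsw.symm)
    rcases ht with h'|h'|h'|h'
    · rw [h'] at htw
      have hw'a : w' ≠ a := htw.ne'
      have hw'd : w' ≠ d := fun hh => nad (hh ▸ htw)
      by_cases hww : w = w'
      · subst hww; exact htri a c w hac hsw htw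
      · exact hM3 c w a w' b d hsw htw hbd hac.ne' (Ne.symm hw'3) hw1 hww
          dbc.symm hcd.ne hwb hw4 hab.ne dad hw'2 hw'd
    · exact absurd h' ht2
    · exact absurd h' ht3
    · rw [h'] at htw
      have hw'd : w' ≠ d := htw.ne'
      have hw'a : w' ≠ a := fun hh => nad (hh ▸ htw.symm)
      by_cases hww : w = w'
      · subst hww; exact htri c d w hcd htw hsw
      · exact hM3 c w d w' a b hsw htw hab hcd.ne (Ne.symm hw'3) hw4 hww
          hac.ne' dbc.symm hw1 hwb dad.symm hbd.ne' hw'a hw'2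
  · exact absurd h hs2

end Comb2
section Comb3

variable {V : Type*} [Fintype V] [DecidableEq V]

/-- No crosses and an outside vertex adjacent to both `a` and `d` — contradiction. -/
lemma lem_Z' {G : SimpleGraph V} (hcov : NoCov G) (hM3 : NoM3 G) (hTE : NoTE G)
    (hK4 : NoK4 G) (a b c d u : V)
    (hab : G.Adj a b) (hcd : G.Adj c d)
    (nac : ¬G.Adj a c) (nad : ¬G.Adj a d) (nbc : ¬G.Adj b c) (nbd : ¬G.Adj b d)
    (dac : a ≠ c) (dad : a ≠ d) (dbc : b ≠ c) (dbd : b ≠ d)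
    (hu1 : u ≠ a) (hu2 : u ≠ b) (hu3 : u ≠ c) (hu4 : u ≠ d)
    (hua : G.Adj u a) (hud : G.Adj u d) (hmeet : MeetsS G a b c d) : False := by
  have htri := no_triangle hcov hM3 hTE hK4 (G := G)
  obtain ⟨s, w, hsw, hs1, hs2, hw1, hw4, hs⟩ := extract_edge hmeet hcov a d
  rcases hs with h|h|h|h
  · exact absurd h hs1
  · rw [h] at hsw
    have hwb : w ≠ b := hsw.ne'
    have hwc : w ≠ c := fun hh => nbc (hh ▸ hsw)
    by_cases hwu : w = u
    · rw [hwu] at hsw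
      exact htri a b u hab hsw hua.symm
    · exact hM3 b w a u c d hsw hua.symm hcd
        hab.ne' hu2.symm hw1 hwu dbc dbd hwc hw4 dac dad hu3 hu4
  · rw [h] at hsw
    have hwc : w ≠ c := hsw.ne'
    have hwb : w ≠ b := fun hh => nbc (hh ▸ hsw.symm)
    by_cases hwu : w = u
    · rw [hwu] at hsw
      exact htri c d u hcd hud.symm hsw
    · exact hM3 c w d u a b hsw hud.symm hab
        hcd.ne hu3.symm hw4 hwu dac.symm dbc.symm hw1 hwb dad.symm dbd.symm hu1 hu2
  · exact absurd h hs2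

set_option maxHeartbeats 1000000 in
/-- No cross edges at all — contradiction. -/
lemma lem_Z {G : SimpleGraph V} (hcov : NoCov G) (hM3 : NoM3 G) (hTE : NoTE G)
    (hK4 : NoK4 G) (a b c d : V)
    (hab : G.Adj a b) (hcd : G.Adj c d)
    (nac : ¬G.Adj a c) (nad : ¬G.Adj a d) (nbc : ¬G.Adj b c) (nbd : ¬G.Adj b d)
    (dac : a ≠ c) (dad : a ≠ d) (dbc : b ≠ c) (dbd : b ≠ d)
    (hmeet : MeetsS G a b c d) : False := by
  have htri := no_triangle hcov hM3 hTE hK4 (G := G)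
  obtain ⟨s, w1, hsw, hs1, hs2, h11, h13, hs⟩ := extract_edge hmeet hcov a c
  obtain ⟨t, w4, htw, ht2, ht4, h42, h44, ht⟩ := extract_edge hmeet hcov b d
  have hmeet' : MeetsS G b a d c := by
    intro p q hpq
    rcases hmeet p q hpq with h|h|h|h|h|h|h|h <;> tauto
  rcases hs with h|h|h|h
  · exact absurd h hs1
  · -- s = b : edge b w1
    rw [h] at hsw
    have h12 : w1 ≠ b := hsw.ne'
    have h14 : w1 ≠ d := fun hh => nbd (hh ▸ hsw)
    rcases ht with h'|h'|h'|h'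
    · -- t = a : edge a w4
      rw [h'] at htw
      have h41 : w4 ≠ a := htw.ne'
      have h43 : w4 ≠ c := fun hh => nac (hh ▸ htw)
      by_cases hww : w4 = w1
      · rw [hww] at htw
        exact htri a b w1 hab hsw htw
      · exact hM3 a w4 b w1 c d htw hsw hcd
          hab.ne h11.symm h42 hww dac dad h43 h44 dbc dbd h13 h14
    · exact absurd h' ht2
    · -- t = c : edge c w4, combo (b,w1),(c,w4)
      rw [h'] at htw
      have h43 : w4 ≠ c := htw.ne'
      have h41 : w4 ≠ a := fun hh => nac (hh ▸ htw.symm)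
      by_cases hww : w4 = w1
      · rw [hww] at htw
        exact lem_Z' hcov hM3 hTE hK4 b a d c w1 hab.symm hcd.symm nbd nbc nad nac
          dbd dbc dad dac h12 h11 h14 h13 hsw.symm htw.symm hmeet'
      · obtain ⟨r, w5, hrw, hr2, hr3, h52, h53, hr⟩ := extract_edge hmeet hcov b c
        rcases hr with h''|h''|h''|h''
        · -- r = a
          rw [h''] at hrw
          have h51 : w5 ≠ a := hrw.ne'
          have h54 : w5 ≠ d := fun hh => nad (hh ▸ hrw)
          by_cases h5w1 : w5 = w1
          · rw [h5w1] at hrw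
            exact htri a b w1 hab hsw hrw
          by_cases h5w4 : w5 = w4
          · rw [h5w4] at hrw
            exact hM3 a w4 b w1 c d hrw hsw hcd
              hab.ne h11.symm h42 hww dac dad h43 h44 dbc dbd h13 h14
          · exact hM3 a w5 c w4 b w1 hrw htw hsw
              dac h41.symm h53 h5w4 hab.ne h11.symm h52 h5w1 dbc.symm h13.symm h42 hww
        · exact absurd h'' hr2
        · exact absurd h'' hr3
        · -- r = d
          rw [h''] at hrw
          have h54 : w5 ≠ d := hrw.ne'
          have h51 : w5 ≠ a := fun hh => nad (hh ▸ hrw.symm)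
          by_cases h5w4 : w5 = w4
          · rw [h5w4] at hrw
            exact htri c d w4 hcd hrw htw
          by_cases h5w1 : w5 = w1
          · rw [h5w1] at hrw
            exact hM3 d w1 c w4 a b hrw htw hab hcd.ne' h44.symm h13
              (fun hh => hww hh.symm) dad.symm dbd.symm h11 h12 dac.symm dbc.symm h41 h42
          · exact hM3 d w5 c w4 a b hrw htw hab hcd.ne' h44.symm h53 h5w4
              dad.symm dbd.symm h51 h52 dac.symm dbc.symm h41 h42
    · exact absurd h' ht4
  · exact absurd h hs2
  · -- s = d : edge d w1
    rw [h] at hsw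
    have h14 : w1 ≠ d := hsw.ne'
    have h12 : w1 ≠ b := fun hh => nbd (hh ▸ hsw.symm)
    rcases ht with h'|h'|h'|h'
    · -- t = a : edge a w4, combo (a,w4),(d,w1)
      rw [h'] at htw
      have h41 : w4 ≠ a := htw.ne'
      have h43 : w4 ≠ c := fun hh => nac (hh ▸ htw)
      by_cases hww : w4 = w1
      · rw [hww] at htw
        exact lem_Z' hcov hM3 hTE hK4 a b c d w1 hab hcd nac nad nbc nbd
          dac dad dbc dbd h11 h12 h13 h14 htw.symm hsw.symm hmeet
      · obtain ⟨r, w5, hrw, hr1, hr4, h51, h54, hr⟩ := extract_edge hmeet hcov a d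
        rcases hr with h''|h''|h''|h''
        · exact absurd h'' hr1
        · -- r = b
          rw [h''] at hrw
          have h52 : w5 ≠ b := hrw.ne'
          have h53 : w5 ≠ c := fun hh => nbc (hh ▸ hrw)
          by_cases h5w4 : w5 = w4
          · rw [h5w4] at hrw
            exact htri a b w4 hab hrw htw
          · exact hM3 a w4 b w5 c d htw hrw hcd
              hab.ne h51.symm h42 (fun hh => h5w4 hh.symm) dac dad h43 h44 dbc dbd h53 h54
        · -- r = c
          rw [h''] at hrw
          have h53 : w5 ≠ c := hrw.ne'
          have h52 : w5 ≠ b := fun hh => nbc (hh ▸ hrw.symm)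
          by_cases h5w1 : w5 = w1
          · rw [h5w1] at hrw
            exact htri c d w1 hcd hsw hrw
          · exact hM3 c w5 d w1 a b hrw hsw hab
              hcd.ne h13.symm h54 h5w1 dac.symm dbc.symm h51 h52 dad.symm dbd.symm h11 h12
        · exact absurd h'' hr4
    · exact absurd h' ht2
    · -- t = c : edge c w4, combo (c,w4),(d,w1)
      rw [h'] at htw
      have h43 : w4 ≠ c := htw.ne'
      have h41 : w4 ≠ a := fun hh => nac (hh ▸ htw.symm)
      by_cases hww : w4 = w1
      · rw [hww] at htw
        exact htri c d w1 hcd hsw htw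
      · exact hM3 c w4 d w1 a b htw hsw hab
          hcd.ne h13.symm h44 hww dac.symm dbc.symm h41 h42 dad.symm dbd.symm h11 h12
    · exact absurd h' ht4

end Comb3
section Comb4

variable {V : Type*} [Fintype V] [DecidableEq V]

set_option maxHeartbeats 1000000 in
/-- Single cross edge `bc`: the graph is a 5-cycle `a-b-c-d-u-a`. -/
lemma lem_B {G : SimpleGraph V} (hcov : NoCov G) (hM3 : NoM3 G) (hTE : NoTE G)
    (hK4 : NoK4 G) (hconn : G.Connected) (a b c d : V)
    (hab : G.Adj a b) (hcd : G.Adj c d) (hbc : G.Adj b c)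
    (nac : ¬G.Adj a c) (nad : ¬G.Adj a d) (nbd : ¬G.Adj b d)
    (dac : a ≠ c) (dad : a ≠ d) (dbd : b ≠ d)
    (hmeet : MeetsS G a b c d) : ∃ u, IsC5 G a b c d u := by
  have htri := no_triangle hcov hM3 hTE hK4 (G := G)
  -- edge avoiding {a,c} : endpoint b or d
  obtain ⟨s, u, hsw, hs1, hs3, hu1, hu3, hs⟩ := extract_edge hmeet hcov a c
  rcases hs with h|h|h|h
  · exact absurd h hs1
  · -- s = b : contradiction branch
    rw [h] at hsw
    have hu2 : u ≠ b := hsw.ne'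
    have hu4 : u ≠ d := fun hh => nbd (hh ▸ hsw)
    exfalso
    have haveNoA : ∀ w', w' ≠ a → w' ≠ b → w' ≠ c → w' ≠ d → ¬G.Adj a w' := by
      intro w' k1 k2 k3 k4 haw
      by_cases hwu : w' = u
      · rw [hwu] at haw
        exact htri a b u hab hsw haw
      · exact hM3 b u a w' c d hsw haw hcd
          hab.ne' k2.symm hu1 (fun hh => hwu hh.symm) hbc.ne dbd hu3 hu4 dac dad k3 k4
    -- edge avoiding {b,c} : get d-neighbor w2
    obtain ⟨r, w2, hrw, hr2, hr3, h2b, h2c, hr⟩ := extract_edge hmeet hcov b c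
    have hw2 : G.Adj d w2 ∧ w2 ≠ a ∧ w2 ≠ d := by
      rcases hr with h''|h''|h''|h''
      · rw [h''] at hrw
        have : w2 ≠ d := fun hh => nad (hh ▸ hrw)
        exact absurd hrw (haveNoA w2 hrw.ne' h2b h2c this)
      · exact absurd h'' hr2
      · exact absurd h'' hr3
      · rw [h''] at hrw
        exact ⟨hrw, fun hh => nad (hh ▸ hrw.symm), hrw.ne'⟩
    obtain ⟨hdw2, h2a, h2d⟩ := hw2
    -- edge avoiding {b,d} : get c-neighbor w3
    obtain ⟨t, w3, htw, ht2, ht4, h3b, h3d, ht⟩ := extract_edge hmeet hcov b d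
    have hw3 : G.Adj c w3 ∧ w3 ≠ a ∧ w3 ≠ c := by
      rcases ht with h''|h''|h''|h''
      · rw [h''] at htw
        have : w3 ≠ c := fun hh => nac (hh ▸ htw)
        exact absurd htw (haveNoA w3 htw.ne' h3b this h3d)
      · exact absurd h'' ht2
      · rw [h''] at htw
        exact ⟨htw, fun hh => nac (hh ▸ htw.symm), htw.ne'⟩
      · exact absurd h'' ht4
    obtain ⟨hcw3, h3a, h3c⟩ := hw3
    by_cases h3u : w3 = u
    · rw [h3u] at hcw3
      exact htri b c u hbc hcw3 hsw
    by_cases h32 : w3 = w2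
    · rw [h32] at hcw3
      exact htri c d w2 hcd hdw2 hcw3
    · exact hM3 c w3 a b d w2 hcw3 hab hdw2
        dac.symm hbc.ne' h3a h3b hcd.ne h2c.symm h3d h32 dad h2a.symm dbd h2b.symm
  · exact absurd h hs3
  · -- s = d : u is the fifth vertex of the 5-cycle
    rw [h] at hsw
    have hu4 : u ≠ d := hsw.ne'
    have hu2 : u ≠ b := fun hh => nbd (hh ▸ hsw.symm)
    have nuc : ¬G.Adj c u := fun hh => htri c d u hcd hsw hh
    -- edge avoiding {b,d} : get a-neighbor equal to u
    obtain ⟨t, w3, htw, ht2, ht4, h3b, h3d, ht⟩ := extract_edge hmeet hcov b d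
    have hau : G.Adj a u := by
      rcases ht with h''|h''|h''|h''
      · rw [h''] at htw
        have h3c : w3 ≠ c := fun hh => nac (hh ▸ htw)
        by_cases h3u : w3 = u
        · rwa [h3u] at htw
        · exact absurd htw (fun hx => hM3 a w3 d u b c hx hsw hbc
            dad hu1.symm h3d h3u hab.ne dac h3b h3c dbd.symm hcd.ne' hu2 hu3)
      · exact absurd h'' ht2
      · rw [h''] at htw
        have h3a : w3 ≠ a := fun hh => nac (hh ▸ htw.symm)
        have h3u : w3 ≠ u := fun hh => nuc (hh ▸ htw)
        exact absurd htw (fun hx => hM3 c w3 d u a b hx hsw hab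
          hcd.ne hu3.symm h3d h3u dac.symm hbc.ne' h3a h3b dad.symm dbd.symm hu1 hu2)
      · exact absurd h'' ht4
    have nub : ¬G.Adj b u := fun hh => htri a b u hab hh hau
    have total : ∀ v, v = a ∨ v = b ∨ v = c ∨ v = d ∨ v = u := by
      intro v
      by_contra hv
      push_neg at hv
      obtain ⟨k1, k2, k3, k4, k5⟩ := hv
      obtain ⟨z, hvz⟩ := exists_neighbor hconn v a k1
      rcases hmeet v z hvz with h'|h'|h'|h'|h'|h'|h'|h'
      · exact k1 h'
      · exact k2 h'
      · exact k3 h'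
      · exact k4 h'
      · rw [h'] at hvz
        exact hM3 a v b c d u hvz.symm hbc hsw
          hab.ne dac k2 k3 dad hau.ne k4 k5 dbd hu2.symm hcd.ne hu3.symm
      · rw [h'] at hvz
        exact hM3 b v c d a u hvz.symm hcd hau
          hbc.ne dbd k3 k4 hab.ne' hu2.symm k1 k5 dac.symm hu3.symm dad.symm hsw.ne
      · rw [h'] at hvz
        exact hM3 c v a b d u hvz.symm hab hsw
          dac.symm hbc.ne' k1 k2 hcd.ne hu3.symm k4 k5 dad hau.ne dbd hu2.symm
      · rw [h'] at hvz
        exact hM3 d v b c a u hvz.symm hbc hau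
          dbd.symm hcd.ne' k2 k3 dad.symm hsw.ne k1 k5 hab.ne' hu2.symm dac.symm hu3.symm
    exact ⟨u, hab, hbc, hcd, hsw, hau.symm, nac, nad, nbd, nub, nuc,
      hab.ne, dac, dad, hau.ne, hbc.ne, dbd, hu2.symm, hcd.ne, hu3.symm, hsw.ne, total⟩

end Comb4
section Master

variable {V : Type*} [Fintype V] [DecidableEq V]

set_option maxHeartbeats 1000000 in
lemma exists_c5 {G : SimpleGraph V} (hcov : NoCov G) (hM3 : NoM3 G) (hTE : NoTE G)
    (hK4 : NoK4 G) (hconn : G.Connected) :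
    ∃ a b c d u, IsC5 G a b c d u := by
  have htri := no_triangle hcov hM3 hTE hK4 (G := G)
  obtain ⟨v0⟩ := hconn.nonempty
  obtain ⟨x1, y1, he1, -, -, -, -⟩ := hcov v0 v0
  obtain ⟨x2, y2, he2, hx2x1, hx2y1, hy2x1, hy2y1⟩ := hcov x1 y1
  have hmeet : MeetsS G x1 y1 x2 y2 := by
    intro p q hpq
    by_contra hcon
    push_neg at hcon
    obtain ⟨c1', c2', c3', c4', c5', c6', c7', c8'⟩ := hcon
    exact hM3 x1 y1 x2 y2 p q he1 he2 hpq hx2x1.symm hy2x1.symm hx2y1.symm hy2y1.symm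
      c1'.symm c5'.symm c2'.symm c6'.symm c3'.symm c7'.symm c4'.symm c8'.symm
  have hmeetA : MeetsS G y1 x1 x2 y2 := by
    intro p q hpq; rcases hmeet p q hpq with h|h|h|h|h|h|h|h <;> tauto
  have hmeetB : MeetsS G x1 y1 y2 x2 := by
    intro p q hpq; rcases hmeet p q hpq with h|h|h|h|h|h|h|h <;> tauto
  have hmeetC : MeetsS G y1 x1 y2 x2 := by
    intro p q hpq; rcases hmeet p q hpq with h|h|h|h|h|h|h|h <;> tauto
  by_cases c1 : G.Adj x1 x2
  · by_cases c4 : G.Adj y1 y2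
    · exact absurd (lem_A hcov hM3 hTE hK4 x1 y1 x2 y2 he1 he2 c1 c4
        hy2x1.symm hx2y1.symm hmeet) id
    by_cases c2 : G.Adj x1 y2
    · exact absurd (htri x1 x2 y2 c1 he2 c2) id
    by_cases c3 : G.Adj y1 x2
    · exact absurd (htri x1 y1 x2 he1 c3 c1) id
    · obtain ⟨u, hu⟩ := lem_B hcov hM3 hTE hK4 hconn y1 x1 x2 y2 he1.symm he2 c1
        c3 c4 c2 hx2y1.symm hy2y1.symm hy2x1.symm hmeetA
      exact ⟨y1, x1, x2, y2, u, hu⟩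
  by_cases c2 : G.Adj x1 y2
  · by_cases c3 : G.Adj y1 x2
    · exact absurd (lem_A hcov hM3 hTE hK4 x1 y1 y2 x2 he1 he2.symm c2 c3
        hx2x1.symm hy2y1.symm hmeetB) id
    by_cases c4 : G.Adj y1 y2
    · exact absurd (htri x1 y1 y2 he1 c4 c2) id
    · obtain ⟨u, hu⟩ := lem_B hcov hM3 hTE hK4 hconn y1 x1 y2 x2 he1.symm he2.symm c2
        c4 c3 c1 hy2y1.symm hx2y1.symm hx2x1.symm hmeetC
      exact ⟨y1, x1, y2, x2, u, hu⟩
  by_cases c3 : G.Adj y1 x2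
  · by_cases c4 : G.Adj y1 y2
    · exact absurd (htri y1 x2 y2 c3 he2 c4) id
    · obtain ⟨u, hu⟩ := lem_B hcov hM3 hTE hK4 hconn x1 y1 x2 y2 he1 he2 c3
        c1 c2 c4 hx2x1.symm hy2x1.symm hy2y1.symm hmeet
      exact ⟨x1, y1, x2, y2, u, hu⟩
  by_cases c4 : G.Adj y1 y2
  · obtain ⟨u, hu⟩ := lem_B hcov hM3 hTE hK4 hconn x1 y1 y2 x2 he1 he2.symm c4
      c2 c1 c3 hy2x1.symm hx2x1.symm hx2y1.symm hmeetB
    exact ⟨x1, y1, y2, x2, u, hu⟩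
  · exact absurd (lem_Z hcov hM3 hTE hK4 x1 y1 x2 y2 he1 he2 c1 c2 c3 c4
      hx2x1.symm hy2x1.symm hx2y1.symm hy2y1.symm hmeet) id

end Master

section Iso

def c5map {α : Type*} (a b c d u : α) : Fin 5 → α := fun i =>
  if i = 0 then a else if i = 1 then b else if i = 2 then c else if i = 3 then d else u

lemma iso_of_isC5 {n : ℕ} {G : SimpleGraph (Fin n)} {a b c d u : Fin n}
    (h : IsC5 G a b c d u) : Nonempty (G ≃g SimpleGraph.cycleGraph 5) := by
  obtain ⟨h1, h2, h3, h4, h5, m1, m2, m3, m4, m5, d1, d2, d3, d4, d5, d6, d7, d8, d9,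
    d10, total⟩ := h
  have hinj : Function.Injective (c5map a b c d u) := by
    intro i j hij
    fin_cases i <;> fin_cases j <;> simp_all [c5map] <;> omega
  have hsurj : Function.Surjective (c5map a b c d u) := by
    intro v
    rcases total v with rfl|rfl|rfl|rfl|rfl
    · exact ⟨0, rfl⟩
    · exact ⟨1, rfl⟩
    · exact ⟨2, rfl⟩
    · exact ⟨3, rfl⟩
    · exact ⟨4, rfl⟩
  have hadj : ∀ i j : Fin 5, G.Adj (c5map a b c d u i) (c5map a b c d u j) ↔
      (SimpleGraph.cycleGraph 5).Adj i j := by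
    have h1' := h1.symm; have h2' := h2.symm; have h3' := h3.symm
    have h4' := h4.symm; have h5' := h5.symm
    have m1' : ¬G.Adj c a := fun hh => m1 hh.symm
    have m2' : ¬G.Adj d a := fun hh => m2 hh.symm
    have m3' : ¬G.Adj d b := fun hh => m3 hh.symm
    have m4' : ¬G.Adj u b := fun hh => m4 hh.symm
    have m5' : ¬G.Adj u c := fun hh => m5 hh.symm
    have irr : ∀ x : Fin n, ¬G.Adj x x := fun x => G.loopless.irrefl x
    intro i j
    fin_cases i <;> fin_cases j <;>
      simp only [c5map] <;>
      norm_num <;>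
      first
        | exact iff_of_true (by assumption) (by decide)
        | exact iff_of_false (by assumption) (by decide)
  exact ⟨(SimpleGraph.Iso.symm ⟨Equiv.ofBijective _ ⟨hinj, hsurj⟩, fun {i j} => hadj i j⟩)⟩

end Iso

/-- A connected finite simple graph with entropy 5/2 is isomorphic to the 5-cycle. -/
theorem connected_entropy_five_halves_iso_cycle {n : ℕ} (G : SimpleGraph (Fin n))
    (hconn : G.Connected) (hent : graphEntropy G = 5/2) :
    Nonempty (G ≃g SimpleGraph.cycleGraph 5) := by
  have hcov : NoCov G := by
    intro u v
    by_contra hcon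
    push_neg at hcon
    have hle := graphEntropy_le_two_of_cover G u v (fun a b hab => by
      by_cases e1 : a = u
      · exact Or.inl e1
      by_cases e2 : a = v
      · exact Or.inr (Or.inl e2)
      by_cases e3 : b = u
      · exact Or.inr (Or.inr (Or.inl e3))
      · exact Or.inr (Or.inr (Or.inr (hcon a b hab e1 e2 e3))))
    rw [hent] at hle
    norm_num at hle
  have hM3 : NoM3 G := by
    intro a1 b1 a2 b2 a3 b3 e1 e2 e3 d1 d2 d3 d4 d5 d6 d7 d8 d9 d10 d11 d12
    have hge := cfg_three_edges G a1 b1 a2 b2 a3 b3 e1 e2 e3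
      d1 d2 d3 d4 d5 d6 d7 d8 d9 d10 d11 d12
    rw [hent] at hge
    norm_num at hge
  have hTE : NoTE G := by
    intro a b c d e e1 e2 e3 e4 k1 k2 k3 k4 k5 k6
    have hge := cfg_triangle_edge G a b c d e e1 e2 e3 e4 k1 k2 k3 k4 k5 k6
    rw [hent] at hge
    norm_num at hge
  have hK4 : NoK4 G := by
    intro a b c d e1 e2 e3 e4 e5 e6
    have hge := cfg_K4 G a b c d e1 e2 e3 e4 e5 e6
    rw [hent] at hge
    norm_num at hge
  obtain ⟨a, b, c, d, u, h⟩ := exists_c5 hcov hM3 hTE hK4 hconn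
  exact iso_of_isC5 h

end
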